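/- Let $d \ge 4$ and $\tau \in S_d$. Suppose for two permutations $\tau', \tau'' \in S_d$ that for all $1 \le j_1 < j_2 < j_3 < j_4 \le d$ both $(\tau'(j_1), \tau'(j_2), \tau'(j_3), \tau'(j_4))$ and $(\tau''(j_1), \tau''(j_2), \tau''(j_3), \tau''(j_4))$ are of the correct cyclic order with respect to $\tau$. Then $\tau'' = \tau' \circ \alpha^k \circ \beta^\ell$ for some $0 \le k < d$ and $\ell \in \{0,1\}$, where $\alpha(j) = j+1 \pmod d$ and $\beta(j) = d+1-j$. -/

import Mathlib

/-- A quadruple `v` of indices is of the correct cyclic order with respect to `τ`: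
some cyclic rotation of the quadruple has strictly monotone values under `τ⁻¹`. -/
def correctOrder4 {d : ℕ} (τ : Equiv.Perm (Fin d)) (v : Fin 4 → Fin d) : Prop :=
  ∃ s : Fin 4, StrictMono (fun a : Fin 4 => τ.symm (v (s + a))) ∨
    StrictAnti (fun a : Fin 4 => τ.symm (v (s + a)))

open Fin.CommRing Fin.NatCast

/-- Auxiliary: a quadruple is cyclically monotone. -/
def cyc4 {n : ℕ} (v : Fin 4 → Fin n) : Prop :=
  ∃ s : Fin 4, StrictMono (fun a : Fin 4 => v (s + a)) ∨ StrictAnti (fun a : Fin 4 => v (s + a))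

lemma fin4mono {α : Type*} [Preorder α] {f : Fin 4 → α}
    (h01 : f 0 < f 1) (h12 : f 1 < f 2) (h23 : f 2 < f 3) : StrictMono f := by
  intro a b hab
  fin_cases a <;> fin_cases b <;>
    first
      | exact absurd hab (by decide)
      | exact h01
      | exact h12
      | exact h23
      | exact lt_trans h01 h12
      | exact lt_trans h12 h23
      | exact lt_trans h01 (lt_trans h12 h23)

lemma addval {n : ℕ} (x c : Fin (n+1)) :
    (x + c).val = if x.val + c.val < n+1 then x.val + c.val else x.val + c.val - (n+1) := by
  rw [Fin.val_add]
  split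
  · exact Nat.mod_eq_of_lt ‹_›
  · rw [Nat.mod_eq_sub_mod (le_of_not_gt ‹_›), Nat.mod_eq_of_lt (by omega)]

lemma shiftM {n : ℕ} (w : Fin 4 → Fin (n+1)) (c : Fin (n+1)) (s : Fin 4)
    (h : StrictMono fun a => w (s + a)) :
    ∃ t : Fin 4, StrictMono fun a => w (t + a) + c := by
  have h01 : w (s+0) < w (s+1) := h (show (0:Fin 4) < 1 by decide)
  have h12 : w (s+1) < w (s+2) := h (show (1:Fin 4) < 2 by decide)
  have h23 : w (s+2) < w (s+3) := h (show (2:Fin 4) < 3 by decide)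
  rw [Fin.lt_def] at h01 h12 h23
  rw [add_zero] at h01
  have i0 : (w s).val < n+1 := (w s).isLt
  have i1 : (w (s+1)).val < n+1 := (w (s+1)).isLt
  have i2 : (w (s+2)).val < n+1 := (w (s+2)).isLt
  have i3 : (w (s+3)).val < n+1 := (w (s+3)).isLt
  have ic : c.val < n+1 := c.isLt
  by_cases H0 : n+1 ≤ (w s).val + c.val
  · refine ⟨s, fin4mono ?_ ?_ ?_⟩ <;>
      · rw [Fin.lt_def]
        simp only [addval, add_assoc, Fin.reduceAdd, add_zero]
        split_ifs <;> omega
  · by_cases H1 : n+1 ≤ (w (s+1)).val + c.val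
    · refine ⟨s + 1, fin4mono ?_ ?_ ?_⟩ <;>
        · rw [Fin.lt_def]
          simp only [addval, add_assoc, Fin.reduceAdd, add_zero]
          split_ifs <;> omega
    · by_cases H2 : n+1 ≤ (w (s+2)).val + c.val
      · refine ⟨s + 2, fin4mono ?_ ?_ ?_⟩ <;>
          · rw [Fin.lt_def]
            simp only [addval, add_assoc, Fin.reduceAdd, add_zero]
            split_ifs <;> omega
      · by_cases H3 : n+1 ≤ (w (s+3)).val + c.val
        · refine ⟨s + 3, fin4mono ?_ ?_ ?_⟩ <;>
            · rw [Fin.lt_def]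
              simp only [addval, add_assoc, Fin.reduceAdd, add_zero]
              split_ifs <;> omega
        · refine ⟨s, fin4mono ?_ ?_ ?_⟩ <;>
            · rw [Fin.lt_def]
              simp only [addval, add_assoc, Fin.reduceAdd, add_zero]
              split_ifs <;> omega

lemma cyc4_add {n : ℕ} {v : Fin 4 → Fin (n+1)} (h : cyc4 v) (c : Fin (n+1)) :
    cyc4 (fun i => v i + c) := by
  obtain ⟨s, hm | ha⟩ := h
  · obtain ⟨t, ht⟩ := shiftM v c s hm
    exact ⟨t, Or.inl ht⟩
  · have hm : StrictMono fun a : Fin 4 => (fun i => (v i).rev) (s + a) := by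
      intro a b hab
      exact Fin.rev_lt_rev.mpr (ha hab)
    obtain ⟨t, ht⟩ := shiftM (fun i => (v i).rev) (-c) s hm
    refine ⟨t, Or.inr ?_⟩
    intro a b hab
    have : (v (t + a) + c).rev < (v (t + b) + c).rev := by
      have e : ∀ x : Fin 4, (v (t + x) + c).rev = (v (t+x)).rev + (-c) := by
        intro x; rw [Fin.rev_add, sub_eq_add_neg]
      rw [e a, e b]; exact ht hab
    exact Fin.rev_lt_rev.mp this

lemma zero_cyc4 {n : ℕ} {a b e : Fin (n+1)} (h : cyc4 ![0, a, b, e])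
    (ha : a ≠ 0) (hb : b ≠ 0) (he : e ≠ 0) :
    (a < b ∧ b < e) ∨ (b < a ∧ e < b) := by
  have ha' : a.val ≠ 0 := Fin.val_ne_zero_iff.mpr ha
  have hb' : b.val ≠ 0 := Fin.val_ne_zero_iff.mpr hb
  have he' : e.val ≠ 0 := Fin.val_ne_zero_iff.mpr he
  obtain ⟨s, hm | hh⟩ := h
  · have h01 := hm (show (0:Fin 4) < 1 by decide)
    have h12 := hm (show (1:Fin 4) < 2 by decide)
    have h23 := hm (show (2:Fin 4) < 3 by decide)
    simp only [Fin.lt_def] at h01 h12 h23 ⊢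
    fin_cases s <;> simp_all
  · have h01 := hh (show (0:Fin 4) < 1 by decide)
    have h12 := hh (show (1:Fin 4) < 2 by decide)
    have h23 := hh (show (2:Fin 4) < 3 by decide)
    simp only [Fin.lt_def] at h01 h12 h23 ⊢
    fin_cases s <;> simp_all

lemma monoL {n : ℕ} (hn : 2 < n + 1) {f : Fin (n+1) → Fin (n+1)}
    (hT : ∀ p q r : Fin (n+1), 0 < p → p < q → q < r →
      (f p < f q ∧ f q < f r) ∨ (f q < f p ∧ f r < f q))
    (hA : f ⟨1, by omega⟩ < f ⟨2, hn⟩) :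
    ∀ i j : Fin (n+1), 0 < i → i < j → f i < f j := by
  set one : Fin (n+1) := ⟨1, by omega⟩ with hone
  set two : Fin (n+1) := ⟨2, hn⟩ with htwo
  have o1 : one.val = 1 := rfl
  have o2 : two.val = 2 := rfl
  have oz : (0 : Fin (n+1)).val = 0 := rfl
  have h01 : (0 : Fin (n+1)) < one := by rw [Fin.lt_def]; omega
  have h12 : one < two := by rw [Fin.lt_def]; omega
  have F : ∀ j, two < j → f two < f j := by
    intro j hj
    rcases hT one two j h01 h12 hj with ⟨_, h⟩ | ⟨h, _⟩
    · exact h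
    · exact absurd hA (asymm h)
  intro i j hi hij
  have hi1 : 1 ≤ i.val := hi
  have hij' : i.val < j.val := hij
  rcases Nat.lt_or_ge i.val 2 with hilt | hige
  · have : i = one := Fin.ext (by omega)
    subst this
    rcases Nat.lt_or_ge j.val 3 with hjlt | hjge
    · have : j = two := Fin.ext (by omega)
      subst this; exact hA
    · have h2j : two < j := by rw [Fin.lt_def]; omega
      exact lt_trans hA (F j h2j)
  · rcases Nat.lt_or_ge i.val 3 with hilt | hige3
    · have : i = two := Fin.ext (by omega)
      subst this
      exact F j hij
    · have h2i : two < i := by rw [Fin.lt_def]; omega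
      rcases hT two i j (by rw [Fin.lt_def]; omega) h2i hij with ⟨_, h⟩ | ⟨h, _⟩
      · exact h
      · exact absurd (F i h2i) (asymm h)

lemma perm_id_of_strictMono {m : ℕ} (f : Equiv.Perm (Fin m)) (h : StrictMono ⇑f) :
    ∀ x, f x = x := by
  have := (StrictMono.range_inj h strictMono_id).mp
    ((f.surjective.range_eq).trans Set.range_id.symm)
  exact fun x => congrFun this x

lemma val_neg' {n : ℕ} (x : Fin (n+1)) (hx : x ≠ 0) : (-x).val = (n+1) - x.val := by
  have h1 : x + (-x) = 0 := add_neg_cancel x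
  rw [Fin.ext_iff, Fin.val_add] at h1
  have h2 : x.val ≠ 0 := Fin.val_ne_zero_iff.mpr hx
  have h3 : (-x).val < n + 1 := (-x).isLt
  have h4 : x.val < n + 1 := x.isLt
  simp only [Fin.val_zero] at h1
  rcases Nat.lt_or_ge (x.val + (-x).val) (n+1) with hlt | hge
  · rw [Nat.mod_eq_of_lt hlt] at h1; omega
  · rw [Nat.mod_eq_sub_mod hge, Nat.mod_eq_of_lt (by omega)] at h1; omega

lemma rev_eq' {n : ℕ} (x : Fin (n+1)) : x.rev = -1 - x := by
  have h := Fin.last_sub x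
  rw [← h]
  congr 1
  rw [Fin.ext_iff, Fin.coe_neg_one]
  simp [Fin.last]

lemma main_rigid {n : ℕ} (hn : 3 ≤ n) (σ : Equiv.Perm (Fin (n+1)))
    (hQ : ∀ j1 j2 j3 j4 : Fin (n+1), j1 < j2 → j2 < j3 → j3 < j4 →
      cyc4 ![σ j1, σ j2, σ j3, σ j4]) :
    (∀ j, σ j = σ 0 + j) ∨ (∀ j, σ j = σ 0 - j) := by
  set c := σ 0 with hc
  set ρ : Equiv.Perm (Fin (n+1)) := σ.trans (Equiv.addLeft (-c)) with hρdef
  have hρ : ∀ j, ρ j = -c + σ j := fun j => rfl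
  have hρ0 : ρ 0 = 0 := by rw [hρ 0, ← hc]; ring
  have hρne : ∀ j : Fin (n+1), j ≠ 0 → ρ j ≠ 0 := by
    intro j hj h
    exact hj (ρ.injective (h.trans hρ0.symm))
  have hT : ∀ p q r : Fin (n+1), 0 < p → p < q → q < r →
      (ρ p < ρ q ∧ ρ q < ρ r) ∨ (ρ q < ρ p ∧ ρ r < ρ q) := by
    intro p q r h0 hpq hqr
    have h4 := hQ 0 p q r h0 hpq hqr
    have h4' := cyc4_add h4 (-c)
    have e : (fun i => ![σ 0, σ p, σ q, σ r] i + (-c))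
        = ![(0 : Fin (n+1)), ρ p, ρ q, ρ r] := by
      funext i
      fin_cases i <;> simp [hρ, ← hc] <;> ring
    rw [e] at h4'
    exact zero_cyc4 h4' (hρne p (Fin.pos_iff_ne_zero.mp h0))
      (hρne q (Fin.pos_iff_ne_zero.mp (lt_trans h0 hpq)))
      (hρne r (Fin.pos_iff_ne_zero.mp (lt_trans (lt_trans h0 hpq) hqr)))
  have hn2 : 2 < n + 1 := by omega
  set one : Fin (n+1) := ⟨1, by omega⟩ with hone
  set two : Fin (n+1) := ⟨2, hn2⟩ with htwo
  have hneq : ρ one ≠ ρ two := by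
    intro h
    have := ρ.injective h
    rw [hone, htwo, Fin.ext_iff] at this
    simp at this
  rcases hneq.lt_or_gt with hA | hA
  · left
    have hM : ∀ i j : Fin (n+1), 0 < i → i < j → ρ i < ρ j := monoL hn2 hT hA
    have hSM : StrictMono ⇑ρ := by
      intro a b hab
      rcases eq_or_ne a 0 with rfl | ha
      · rw [hρ0]
        exact Fin.pos_of_ne_zero (hρne b (Fin.pos_iff_ne_zero.mp hab))
      · exact hM a b (Fin.pos_of_ne_zero ha) hab
    have hid := perm_id_of_strictMono ρ hSM
    intro j
    have := hid j
    rw [hρ j] at this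
    linear_combination this
  · right
    have hT' : ∀ p q r : Fin (n+1), 0 < p → p < q → q < r →
        ((ρ p).rev < (ρ q).rev ∧ (ρ q).rev < (ρ r).rev) ∨
        ((ρ q).rev < (ρ p).rev ∧ (ρ r).rev < (ρ q).rev) := by
      intro p q r h0 hpq hqr
      rcases hT p q r h0 hpq hqr with ⟨u, v⟩ | ⟨u, v⟩
      · exact Or.inr ⟨Fin.rev_lt_rev.mpr u, Fin.rev_lt_rev.mpr v⟩
      · exact Or.inl ⟨Fin.rev_lt_rev.mpr u, Fin.rev_lt_rev.mpr v⟩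
    have hA' : (ρ one).rev < (ρ two).rev := Fin.rev_lt_rev.mpr hA
    have hM' := monoL hn2 (f := fun x => (ρ x).rev) hT' hA'
    have hAnti : ∀ i j : Fin (n+1), 0 < i → i < j → ρ j < ρ i := by
      intro i j hi hij
      exact Fin.rev_lt_rev.mp (hM' i j hi hij)
    set g : Equiv.Perm (Fin (n+1)) := ρ.trans (Equiv.neg (Fin (n+1))) with hgdef
    have hg : ∀ j, g j = -(ρ j) := fun j => rfl
    have hg0 : g 0 = 0 := by rw [hg, hρ0]; ring
    have hgne : ∀ j : Fin (n+1), j ≠ 0 → g j ≠ 0 := by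
      intro j hj h
      exact hj (g.injective (h.trans hg0.symm))
    have hSM : StrictMono ⇑g := by
      intro a b hab
      rcases eq_or_ne a 0 with rfl | ha
      · rw [hg0]
        exact Fin.pos_of_ne_zero (hgne b (Fin.pos_iff_ne_zero.mp hab))
      · have h1 : ρ b < ρ a := hAnti a b (Fin.pos_of_ne_zero ha) hab
        have hbne : b ≠ 0 := Fin.pos_iff_ne_zero.mp (lt_trans (Fin.pos_of_ne_zero ha) hab)
        have hra := hρne a ha
        have hrb := hρne b hbne
        rw [hg, hg, Fin.lt_def, val_neg' _ hra, val_neg' _ hrb]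
        have e1 : (ρ a).val ≠ 0 := Fin.val_ne_zero_iff.mpr hra
        have e2 : (ρ b).val ≠ 0 := Fin.val_ne_zero_iff.mpr hrb
        have e3 : (ρ a).val < n + 1 := (ρ a).isLt
        have e4 : (ρ b).val < n + 1 := (ρ b).isLt
        have e5 : (ρ b).val < (ρ a).val := h1
        omega
    have hid := perm_id_of_strictMono g hSM
    intro j
    have := hid j
    rw [hg j, hρ j] at this
    linear_combination -this

lemma rot_pow {n : ℕ} (k : ℕ) (j : Fin (n+1)) :
    ((finRotate (n+1)) ^ k) j = j + (k : Fin (n+1)) := by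
  induction k with
  | zero => simp
  | succ k ih =>
    rw [pow_succ', Equiv.Perm.mul_apply, finRotate_succ_apply, ih]
    push_cast
    ring

/-- If two permutations `τ'` and `τ''` are both consistent with `τ` on all quadruples
(every increasing quadruple of positions is mapped to a quadruple of the correct cyclic
order with respect to `τ`), then `τ'' = τ' ∘ αᵏ ∘ βˡ` for some `0 ≤ k < d`, `ℓ ∈ {0,1}`,
where `α` is the rotation and `β` the reflection. -/
theorem quadruple_order_determines_up_to_dihedral (d : ℕ) (hd : 4 ≤ d)
    (τ τ' τ'' : Equiv.Perm (Fin d))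
    (h1 : ∀ j1 j2 j3 j4 : Fin d, j1 < j2 → j2 < j3 → j3 < j4 →
      correctOrder4 τ ![τ' j1, τ' j2, τ' j3, τ' j4])
    (h2 : ∀ j1 j2 j3 j4 : Fin d, j1 < j2 → j2 < j3 → j3 < j4 →
      correctOrder4 τ ![τ'' j1, τ'' j2, τ'' j3, τ'' j4]) :
    ∃ k < d, ∃ ℓ < 2,
      τ'' = τ' * (finRotate d) ^ k * (Fin.revPerm : Equiv.Perm (Fin d)) ^ ℓ := by
  obtain ⟨n, rfl⟩ : ∃ n, d = n + 1 := ⟨d - 1, by omega⟩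
  have hn : 3 ≤ n := by omega
  set σ1 : Equiv.Perm (Fin (n+1)) := τ⁻¹ * τ' with hσ1def
  set σ2 : Equiv.Perm (Fin (n+1)) := τ⁻¹ * τ'' with hσ2def
  have hs1 : ∀ j, σ1 j = τ.symm (τ' j) := fun j => rfl
  have hs2 : ∀ j, σ2 j = τ.symm (τ'' j) := fun j => rfl
  have hQ1 : ∀ j1 j2 j3 j4 : Fin (n+1), j1 < j2 → j2 < j3 → j3 < j4 →
      cyc4 ![σ1 j1, σ1 j2, σ1 j3, σ1 j4] := by
    intro j1 j2 j3 j4 ha hb hc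
    obtain ⟨s, hs⟩ := h1 j1 j2 j3 j4 ha hb hc
    refine ⟨s, ?_⟩
    have e : ∀ x : Fin 4, ![σ1 j1, σ1 j2, σ1 j3, σ1 j4] x
        = τ.symm (![τ' j1, τ' j2, τ' j3, τ' j4] x) := by
      intro x; fin_cases x <;> rfl
    simpa only [e] using hs
  have hQ2 : ∀ j1 j2 j3 j4 : Fin (n+1), j1 < j2 → j2 < j3 → j3 < j4 →
      cyc4 ![σ2 j1, σ2 j2, σ2 j3, σ2 j4] := by
    intro j1 j2 j3 j4 ha hb hc
    obtain ⟨s, hs⟩ := h2 j1 j2 j3 j4 ha hb hc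
    refine ⟨s, ?_⟩
    have e : ∀ x : Fin 4, ![σ2 j1, σ2 j2, σ2 j3, σ2 j4] x
        = τ.symm (![τ'' j1, τ'' j2, τ'' j3, τ'' j4] x) := by
      intro x; fin_cases x <;> rfl
    simpa only [e] using hs
  have hτ' : ∀ x, τ' x = τ (σ1 x) := by
    intro x; rw [hs1, Equiv.apply_symm_apply]
  have hτ'' : ∀ x, τ'' x = τ (σ2 x) := by
    intro x; rw [hs2, Equiv.apply_symm_apply]
  set a1 := σ1 0 with ha1
  set a2 := σ2 0 with ha2
  rcases main_rigid hn σ1 hQ1 with hf1 | hf1 <;>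
    rcases main_rigid hn σ2 hQ2 with hf2 | hf2
  · refine ⟨(a2 - a1).val, (a2 - a1).isLt, 0, by norm_num, ?_⟩
    ext j
    rw [pow_zero, mul_one, Equiv.Perm.mul_apply, hτ'' j, hτ' _, rot_pow,
      Fin.cast_val_eq_self, hf1, hf2]
    congr 1
    simp only [ha1, ha2]
    ring
  · refine ⟨(a2 - a1 + 1).val, (a2 - a1 + 1).isLt, 1, by norm_num, ?_⟩
    ext j
    rw [pow_one, Equiv.Perm.mul_apply, Equiv.Perm.mul_apply, hτ'' j, hτ' _, Fin.revPerm_apply,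
      rev_eq', rot_pow, Fin.cast_val_eq_self, hf1, hf2]
    congr 1
    simp only [ha1, ha2]
    ring
  · refine ⟨(a1 - a2 + 1).val, (a1 - a2 + 1).isLt, 1, by norm_num, ?_⟩
    ext j
    rw [pow_one, Equiv.Perm.mul_apply, Equiv.Perm.mul_apply, hτ'' j, hτ' _, Fin.revPerm_apply,
      rev_eq', rot_pow, Fin.cast_val_eq_self, hf1, hf2]
    congr 1
    simp only [ha1, ha2]
    ring
  · refine ⟨(a1 - a2).val, (a1 - a2).isLt, 0, by norm_num, ?_⟩
    ext j
    rw [pow_zero, mul_one, Equiv.Perm.mul_apply, hτ'' j, hτ' _, rot_pow,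
      Fin.cast_val_eq_self, hf1, hf2]
    congr 1
    simp only [ha1, ha2]
    ring
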